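/- For every integer n ≥ 1 and every x ∈ ℂ, x · 𝒫_n(x) = -(i/2)√((2n+1)(2n+2)) · 𝒫_{n+1}(x) + (i/2)√((2n-1)(2n)) · 𝒫_{n-1}(x); moreover x · 𝒫_0(x) = -(i/√2) · 𝒫_1(x). (Equivalently, the multiplication by the variable is represented in the basis (𝒫_n) by the hermitian Jacobi matrix with zero diagonal and entries α_n = (i/2)√((2n+1)(2n+2)) above the diagonal.) -/

import Mathlib

open MeasureTheory Complex Finset

/-- The polynomials `𝒫_m` as functions on `ℂ`. -/
noncomputable def Pc (m : ℕ) (x : ℂ) : ℂ :=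
  (Real.sqrt ((2 * m).factorial) : ℂ) *
    ∑ k ∈ Finset.range (m + 1),
      (-1 : ℂ) ^ k * (2 : ℂ) ^ (3 * (k : ℤ) - (m : ℤ)) *
        (∏ j ∈ Finset.range k, ((j : ℂ) - Complex.I * x / 2 + 1 / 4)) /
        (((2 * k).factorial : ℂ) * ((m - k).factorial : ℂ))

noncomputable def Pp (k : ℕ) (x : ℂ) : ℂ :=
  ∏ j ∈ Finset.range k, ((j : ℂ) - Complex.I * x / 2 + 1 / 4)


noncomputable def cc (m k : ℕ) : ℂ :=
  (-1 : ℂ) ^ k * (2 : ℂ) ^ (3 * (k : ℤ) - (m : ℤ)) /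
    (((2 * k).factorial : ℂ) * ((m - k).factorial : ℂ))

lemma cc_eq (m k : ℕ) :
    cc m k = (-1 : ℂ) ^ k * ((2:ℂ) ^ (3 * k) / (2:ℂ) ^ m) /
      (((2 * k).factorial : ℂ) * ((m - k).factorial : ℂ)) := by
  unfold cc
  rw [show (3 * (k : ℤ) - (m : ℤ)) = ((3*k : ℕ) : ℤ) - ((m : ℕ) : ℤ) by push_cast; ring,
    zpow_sub₀ (by norm_num : (2:ℂ) ≠ 0), zpow_natCast, zpow_natCast]

lemma fact_ne (m : ℕ) : ((m.factorial : ℂ)) ≠ 0 :=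
  Nat.cast_ne_zero.mpr (Nat.factorial_pos m).ne'

lemma case0 (s : ℕ) :
    -(Complex.I * (2*(0:ℂ) + 1/2)) * cc (s+1) 0
      = -(Complex.I/2) * ((2*((s:ℂ)+1)+1) * (2*((s:ℂ)+1)+2)) * cc (s+2) 0
        + (Complex.I/2) * cc s 0 := by
  rw [cc_eq, cc_eq, cc_eq]
  simp only [Nat.sub_zero, Nat.mul_zero, Nat.factorial_zero, Nat.cast_one, pow_zero, one_mul]
  have hf2 : (((s+2).factorial : ℕ) : ℂ) = ((s:ℂ)+2)*((s:ℂ)+1)*(s.factorial : ℕ) := by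
    rw [Nat.factorial_succ, Nat.factorial_succ]; push_cast; ring
  have hf3 : (((s+1).factorial : ℕ) : ℂ) = ((s:ℂ)+1)*(s.factorial : ℕ) := by
    rw [Nat.factorial_succ]; push_cast; ring
  rw [hf2, hf3]
  have hs := fact_ne s
  have h2 : (2:ℂ) ≠ 0 := by norm_num
  have hs1 : ((s:ℂ)+1) ≠ 0 := by
    have : ((s+1 : ℕ) : ℂ) ≠ 0 := Nat.cast_ne_zero.mpr (by omega)
    push_cast at this; exact this
  have hs2 : ((s:ℂ)+2) ≠ 0 := by
    have : ((s+2 : ℕ) : ℂ) ≠ 0 := Nat.cast_ne_zero.mpr (by omega)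
    push_cast at this; exact this
  field_simp
  ring

lemma caseN (j : ℕ) :
    2 * Complex.I * cc (j+1) j + (-(Complex.I * (2*((j:ℂ)+1) + 1/2))) * cc (j+1) (j+1)
      = -(Complex.I/2) * ((2*((j:ℂ)+1)+1) * (2*((j:ℂ)+1)+2)) * cc (j+2) (j+1) := by
  rw [cc_eq, cc_eq, cc_eq]
  have e1 : (j+1) - j = 1 := by omega
  have e2 : (j+1) - (j+1) = 0 := by omega
  have e3 : (j+2) - (j+1) = 1 := by omega
  rw [e1, e2, e3]
  simp only [Nat.factorial_one, Nat.factorial_zero, Nat.cast_one, mul_one]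
  have hf1 : (((2*(j+1)).factorial : ℕ) : ℂ) = (2*(j:ℂ)+2) * (2*(j:ℂ)+1) * ((2*j).factorial : ℕ) := by
    rw [show 2*(j+1) = 2*j+1+1 from rfl, Nat.factorial_succ, Nat.factorial_succ]
    push_cast; ring
  rw [hf1]
  have h2j := fact_ne (2*j)
  have h2 : (2:ℂ) ≠ 0 := by norm_num
  have hj1 : (2*(j:ℂ)+1) ≠ 0 := by
    have : ((2*j+1 : ℕ) : ℂ) ≠ 0 := Nat.cast_ne_zero.mpr (by omega)
    push_cast at this; exact this
  have hj2 : (2*(j:ℂ)+2) ≠ 0 := by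
    have : ((2*j+2 : ℕ) : ℂ) ≠ 0 := Nat.cast_ne_zero.mpr (by omega)
    push_cast at this; exact this
  field_simp
  ring

lemma caseTop (j : ℕ) :
    2 * Complex.I * cc (j+1) (j+1)
      = -(Complex.I/2) * ((2*((j:ℂ)+1)+1) * (2*((j:ℂ)+1)+2)) * cc (j+2) (j+2) := by
  rw [cc_eq, cc_eq]
  have e2 : (j+1) - (j+1) = 0 := by omega
  have e3 : (j+2) - (j+2) = 0 := by omega
  rw [e2, e3]
  simp only [Nat.factorial_zero, Nat.cast_one, mul_one]
  have hf1 : (((2*(j+2)).factorial : ℕ) : ℂ)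
      = (2*(j:ℂ)+4) * (2*(j:ℂ)+3) * ((2*(j+1)).factorial : ℕ) := by
    rw [show 2*(j+2) = 2*(j+1)+1+1 from rfl, Nat.factorial_succ, Nat.factorial_succ]
    push_cast; ring
  rw [hf1]
  have h2j := fact_ne (2*(j+1))
  have h2 : (2:ℂ) ≠ 0 := by norm_num
  have hj1 : (2*(j:ℂ)+3) ≠ 0 := by
    have : ((2*j+3 : ℕ) : ℂ) ≠ 0 := Nat.cast_ne_zero.mpr (by omega)
    push_cast at this; exact this
  have hj2 : (2*(j:ℂ)+4) ≠ 0 := by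
    have : ((2*j+4 : ℕ) : ℂ) ≠ 0 := Nat.cast_ne_zero.mpr (by omega)
    push_cast at this; exact this
  field_simp
  ring


lemma caseMid (j s : ℕ) :
    2 * Complex.I * cc (j+s+2) j + (-(Complex.I * (2*((j:ℂ)+1) + 1/2))) * cc (j+s+2) (j+1)
      = -(Complex.I/2) * ((2*((j:ℂ)+(s:ℂ)+2)+1) * (2*((j:ℂ)+(s:ℂ)+2)+2)) * cc (j+s+3) (j+1)
        + (Complex.I/2) * cc (j+s+1) (j+1) := by
  rw [cc_eq, cc_eq, cc_eq, cc_eq]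
  have e1 : (j+s+2) - j = s+2 := by omega
  have e2 : (j+s+2) - (j+1) = s+1 := by omega
  have e3 : (j+s+3) - (j+1) = s+2 := by omega
  have e4 : (j+s+1) - (j+1) = s := by omega
  rw [e1, e2, e3, e4]
  have hf1 : (((2*(j+1)).factorial : ℕ) : ℂ) = (2*(j:ℂ)+2) * (2*(j:ℂ)+1) * ((2*j).factorial : ℕ) := by
    rw [show 2*(j+1) = 2*j+1+1 from rfl, Nat.factorial_succ, Nat.factorial_succ]
    push_cast; ring
  have hf2 : (((s+2).factorial : ℕ) : ℂ) = ((s:ℂ)+2)*((s:ℂ)+1)*(s.factorial : ℕ) := by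
    rw [Nat.factorial_succ, Nat.factorial_succ]; push_cast; ring
  have hf3 : (((s+1).factorial : ℕ) : ℂ) = ((s:ℂ)+1)*(s.factorial : ℕ) := by
    rw [Nat.factorial_succ]; push_cast; ring
  rw [hf1, hf2, hf3]
  have h2j := fact_ne (2*j)
  have hs := fact_ne s
  have h2 : (2:ℂ) ≠ 0 := by norm_num
  have hs1 : ((s:ℂ)+1) ≠ 0 := by
    have : ((s+1 : ℕ) : ℂ) ≠ 0 := Nat.cast_ne_zero.mpr (by omega)
    push_cast at this; exact this
  have hs2 : ((s:ℂ)+2) ≠ 0 := by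
    have : ((s+2 : ℕ) : ℂ) ≠ 0 := Nat.cast_ne_zero.mpr (by omega)
    push_cast at this; exact this
  have hj1 : (2*(j:ℂ)+1) ≠ 0 := by
    have : ((2*j+1 : ℕ) : ℂ) ≠ 0 := Nat.cast_ne_zero.mpr (by omega)
    push_cast at this; exact this
  have hj2 : (2*(j:ℂ)+2) ≠ 0 := by
    have : ((2*j+2 : ℕ) : ℂ) ≠ 0 := Nat.cast_ne_zero.mpr (by omega)
    push_cast at this; exact this
  field_simp
  ring


noncomputable def Sc (m : ℕ) (x : ℂ) : ℂ :=
  ∑ k ∈ Finset.range (m + 1), cc m k * Pp k x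

lemma Pc_eq (m : ℕ) (x : ℂ) :
    Pc m x = ((Real.sqrt ((2 * m).factorial) : ℝ) : ℂ) * Sc m x := by
  unfold Pc Sc cc Pp
  congr 1
  exact Finset.sum_congr rfl fun k _ => by ring

lemma keyA (k : ℕ) (x : ℂ) :
    x * Pp k x = 2 * Complex.I * Pp (k + 1) x
      - Complex.I * (2 * (k:ℂ) + 1 / 2) * Pp k x := by
  unfold Pp
  rw [Finset.prod_range_succ]
  have h : (2:ℂ) * Complex.I * ((k:ℂ) - Complex.I * x / 2 + 1/4)
      - Complex.I * (2*(k:ℂ) + 1/2) = x := by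
    field_simp
    ring_nf
    rw [Complex.I_sq]
    ring
  calc x * ∏ j ∈ Finset.range k, ((j : ℂ) - Complex.I * x / 2 + 1 / 4)
      = (2 * Complex.I * ((k:ℂ) - Complex.I * x / 2 + 1/4)
        - Complex.I * (2*(k:ℂ) + 1/2)) * ∏ j ∈ Finset.range k, ((j : ℂ) - Complex.I * x / 2 + 1 / 4) := by
        rw [h]
    _ = _ := by ring

lemma coeff_id (m k : ℕ) (hk : k ≤ m + 2) :
    (if k = 0 then 0 else 2 * Complex.I * cc (m+1) (k-1))
      + (if k ≤ m+1 then -(Complex.I * (2*(k:ℂ) + 1/2)) * cc (m+1) k else 0)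
    = -(Complex.I/2) * ((2*((m:ℂ)+1)+1) * (2*((m:ℂ)+1)+2)) * cc (m+2) k
      + (if k ≤ m then (Complex.I/2) * cc m k else 0) := by
  rcases k with _ | j
  · rw [if_pos rfl, if_pos (by omega : 0 ≤ m+1), if_pos (by omega : 0 ≤ m), zero_add]
    push_cast
    linear_combination case0 m
  · rw [if_neg (Nat.succ_ne_zero j)]
    simp only [Nat.succ_sub_one]
    by_cases h1 : j + 1 ≤ m
    · obtain ⟨s, rfl⟩ : ∃ s, m = j + s + 1 := ⟨m - j - 1, by omega⟩
      rw [if_pos (by omega), if_pos (by omega)]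
      simp only [show j+s+1+1 = j+s+2 from rfl, show j+s+1+2 = j+s+3 from rfl]
      push_cast
      linear_combination caseMid j s
    · by_cases h2 : j + 1 ≤ m + 1
      · have : j = m := by omega
        subst this
        rw [if_pos (by omega), if_neg (by omega), add_zero]
        push_cast
        linear_combination caseN j
      · have hj : j = m + 1 := by omega
        subst hj
        rw [if_neg (by omega), if_neg (by omega), add_zero, add_zero]
        simp only [show m+1+1 = m+2 from rfl]
        push_cast
        linear_combination caseTop m

lemma Srec (m : ℕ) (x : ℂ) :
    x * Sc (m+1) x
      = -(Complex.I/2) * ((2*((m:ℂ)+1)+1) * (2*((m:ℂ)+1)+2)) * Sc (m+2) x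
        + (Complex.I/2) * Sc m x := by
  have hL : x * Sc (m+1) x
      = (∑ k ∈ Finset.range (m+3), (if k = 0 then 0 else 2*Complex.I*cc (m+1) (k-1)) * Pp k x)
        + ∑ k ∈ Finset.range (m+3),
            (if k ≤ m+1 then -(Complex.I*(2*(k:ℂ)+1/2)) * cc (m+1) k else 0) * Pp k x := by
    have h1 : ∑ k ∈ Finset.range (m+3), (if k = 0 then (0:ℂ) else 2*Complex.I*cc (m+1) (k-1)) * Pp k x
        = ∑ k ∈ Finset.range (m+2), 2*Complex.I*cc (m+1) k * Pp (k+1) x := by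
      rw [Finset.sum_range_succ']
      simp
    have h2 : ∑ k ∈ Finset.range (m+3),
          (if k ≤ m+1 then -(Complex.I*(2*(k:ℂ)+1/2)) * cc (m+1) k else 0) * Pp k x
        = ∑ k ∈ Finset.range (m+2), -(Complex.I*(2*(k:ℂ)+1/2)) * cc (m+1) k * Pp k x := by
      rw [Finset.sum_range_succ, if_neg (by omega), zero_mul, add_zero]
      exact Finset.sum_congr rfl fun k hk => by
        have := Finset.mem_range.mp hk
        rw [if_pos (by omega)]
    rw [h1, h2, ← Finset.sum_add_distrib, Sc, Finset.mul_sum]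
    exact Finset.sum_congr rfl fun k _ => by
      have h := keyA k x
      calc x * (cc (m+1) k * Pp k x) = cc (m+1) k * (x * Pp k x) := by ring
        _ = cc (m+1) k * (2*Complex.I*Pp (k+1) x - Complex.I*(2*(k:ℂ)+1/2)*Pp k x) := by rw [h]
        _ = _ := by ring
  have hR : -(Complex.I/2) * ((2*((m:ℂ)+1)+1) * (2*((m:ℂ)+1)+2)) * Sc (m+2) x
        + (Complex.I/2) * Sc m x
      = ∑ k ∈ Finset.range (m+3),
          (-(Complex.I/2) * ((2*((m:ℂ)+1)+1) * (2*((m:ℂ)+1)+2)) * cc (m+2) k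
            + (if k ≤ m then (Complex.I/2) * cc m k else 0)) * Pp k x := by
    have h3 : ∑ k ∈ Finset.range (m+3), (if k ≤ m then (Complex.I/2) * cc m k else 0) * Pp k x
        = (Complex.I/2) * Sc m x := by
      rw [Finset.sum_range_succ, Finset.sum_range_succ, if_neg (by omega), if_neg (by omega),
        zero_mul, add_zero, zero_mul, add_zero, Sc, Finset.mul_sum]
      exact Finset.sum_congr rfl fun k hk => by
        have := Finset.mem_range.mp hk
        rw [if_pos (by omega)]
        ring
    have hsplit : ∑ k ∈ Finset.range (m+3),
          (-(Complex.I/2) * ((2*((m:ℂ)+1)+1) * (2*((m:ℂ)+1)+2)) * cc (m+2) k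
            + (if k ≤ m then (Complex.I/2) * cc m k else 0)) * Pp k x
        = (∑ k ∈ Finset.range (m+3),
            -(Complex.I/2) * ((2*((m:ℂ)+1)+1) * (2*((m:ℂ)+1)+2)) * cc (m+2) k * Pp k x)
          + ∑ k ∈ Finset.range (m+3), (if k ≤ m then (Complex.I/2) * cc m k else 0) * Pp k x := by
      rw [← Finset.sum_add_distrib]
      exact Finset.sum_congr rfl fun k _ => by ring
    rw [hsplit, h3, Sc, Finset.mul_sum]
    congr 1
    exact Finset.sum_congr rfl fun k _ => by ring
  rw [hL, hR, ← Finset.sum_add_distrib]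
  exact Finset.sum_congr rfl fun k hk => by
    rw [← add_mul]
    exact congrArg (· * Pp k x) (coeff_id m k (by have := Finset.mem_range.mp hk; omega))

/-- the three-term recurrence: for `n ≥ 1`,
`x 𝒫_n(x) = -(i/2)√((2n+1)(2n+2)) 𝒫_{n+1}(x) + (i/2)√((2n-1)(2n)) 𝒫_{n-1}(x)`,
and `x 𝒫_0(x) = -(i/√2) 𝒫_1(x)`. -/
theorem stmt3 :
    (∀ n : ℕ, 1 ≤ n → ∀ x : ℂ,
        x * Pc n x
          = -(Complex.I / 2) * (Real.sqrt ((2 * (n : ℝ) + 1) * (2 * (n : ℝ) + 2)) : ℂ) *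
              Pc (n + 1) x
            + (Complex.I / 2) * (Real.sqrt ((2 * (n : ℝ) - 1) * (2 * (n : ℝ))) : ℂ) *
              Pc (n - 1) x)
    ∧ (∀ x : ℂ, x * Pc 0 x = -(Complex.I / (Real.sqrt 2 : ℂ)) * Pc 1 x) := by
  constructor
  · intro n hn x
    obtain ⟨m, rfl⟩ : ∃ m, n = m + 1 := ⟨n - 1, by omega⟩
    rw [show m + 1 - 1 = m from rfl, Pc_eq, Pc_eq, Pc_eq]
    have hfact2 : (((2*(m+1+1)).factorial : ℕ) : ℝ)
        = (2*(m:ℝ)+3)*(2*(m:ℝ)+4) * (((2*(m+1)).factorial : ℕ) : ℝ) := by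
      rw [show 2*(m+1+1) = 2*(m+1)+1+1 from rfl, Nat.factorial_succ, Nat.factorial_succ]
      push_cast; ring
    have hfact1 : (((2*(m+1)).factorial : ℕ) : ℝ)
        = (2*(m:ℝ)+1)*(2*(m:ℝ)+2) * (((2*m).factorial : ℕ) : ℝ) := by
      rw [show 2*(m+1) = 2*m+1+1 from rfl, Nat.factorial_succ, Nat.factorial_succ]
      push_cast; ring
    have hA : Real.sqrt ((2 * ((m+1:ℕ):ℝ) + 1) * (2 * ((m+1:ℕ):ℝ) + 2))
          * Real.sqrt (((2*(m+1+1)).factorial : ℕ) : ℝ)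
        = (2*(m:ℝ)+3)*(2*(m:ℝ)+4) * Real.sqrt (((2*(m+1)).factorial : ℕ) : ℝ) := by
      have e : Real.sqrt ((2*(m:ℝ)+3)*(2*(m:ℝ)+4) * (((2*(m+1)).factorial : ℕ) : ℝ))
          = Real.sqrt ((2*(m:ℝ)+3)*(2*(m:ℝ)+4)) * Real.sqrt (((2*(m+1)).factorial : ℕ) : ℝ) :=
        Real.sqrt_mul (by positivity) _
      rw [show (2 * ((m+1:ℕ):ℝ) + 1) * (2 * ((m+1:ℕ):ℝ) + 2)
            = (2*(m:ℝ)+3)*(2*(m:ℝ)+4) by push_cast; ring,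
        hfact2, e, ← mul_assoc, Real.mul_self_sqrt (by positivity)]
    have hB : Real.sqrt ((2 * ((m+1:ℕ):ℝ) - 1) * (2 * ((m+1:ℕ):ℝ)))
          * Real.sqrt (((2*m).factorial : ℕ) : ℝ)
        = Real.sqrt (((2*(m+1)).factorial : ℕ) : ℝ) := by
      have e : Real.sqrt ((2*(m:ℝ)+1)*(2*(m:ℝ)+2) * (((2*m).factorial : ℕ) : ℝ))
          = Real.sqrt ((2*(m:ℝ)+1)*(2*(m:ℝ)+2)) * Real.sqrt (((2*m).factorial : ℕ) : ℝ) :=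
        Real.sqrt_mul (by positivity) _
      rw [show (2 * ((m+1:ℕ):ℝ) - 1) * (2 * ((m+1:ℕ):ℝ))
            = (2*(m:ℝ)+1)*(2*(m:ℝ)+2) by push_cast; ring,
        hfact1, e]
    have hA' := congrArg (fun t : ℝ => (t : ℂ)) hA
    have hB' := congrArg (fun t : ℝ => (t : ℂ)) hB
    simp only [Complex.ofReal_mul, Complex.ofReal_add, Complex.ofReal_ofNat,
      Complex.ofReal_natCast, Complex.ofReal_one] at hA' hB'
    have h := Srec m x
    push_cast at h
    linear_combination ((Real.sqrt ((2*(m+1)).factorial) : ℝ) : ℂ) * h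
      + (Complex.I/2) * Sc (m+2) x * hA' + (-(Complex.I/2)) * Sc m x * hB'
  · intro x
    rw [Pc_eq, Pc_eq]
    have h0 : Sc 0 x = 1 := by
      unfold Sc cc Pp
      simp
    have h1 : Sc 1 x = Complex.I * x := by
      unfold Sc cc Pp
      rw [Finset.sum_range_succ, Finset.sum_range_one, Finset.prod_range_one]
      norm_num [Nat.factorial]
      ring
    rw [h0, h1]
    have h2 : ((2*0).factorial : ℝ) = 1 := by norm_num [Nat.factorial]
    have h3 : ((2*1).factorial : ℝ) = 2 := by norm_num [Nat.factorial]
    rw [h2, h3, Real.sqrt_one]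
    have hne : ((Real.sqrt 2 : ℝ) : ℂ) ≠ 0 :=
      Complex.ofReal_ne_zero.mpr (by positivity)
    have hsq : ((Real.sqrt 2 : ℝ) : ℂ) * ((Real.sqrt 2 : ℝ) : ℂ) = 2 := by
      norm_cast
      rw [Real.mul_self_sqrt (by norm_num)]
    field_simp
    linear_combination x * Complex.I_sq + x * Complex.ofReal_one
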